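/- Let p, q be real numbers with 1 < p ≤ 2 < q and 1/p + 1/q > 1. Then (q−1)^{(q−p)/(p(q−2))} ≤ 1/(p−1); that is, the constant (q−1)^{((q−p)/(p(q−2))) · (d/2)} is at most the constant (p−1)^{−d/2} for every positive integer d. -/

import Mathlib

open Real Set

lemma chord_key (s r : ℝ) (hs : 1 < s) (hr1 : 1 ≤ r) (hrs : r ≤ s) :
    (r * s - 1) * Real.log r ≤ (s + 1) * (r - 1) * Real.log s := by
  have hsne : s - 1 ≠ 0 := sub_ne_zero.mpr hs.ne'
  have hconv : ConvexOn ℝ (Set.Ici (1:ℝ)) (fun x => (x * s - 1) * Real.log x) := by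
    have h1 : ConvexOn ℝ (Set.Ici (1:ℝ)) (fun x => s * (x * Real.log x)) :=
      (Real.convexOn_mul_log.subset (Set.Ici_subset_Ici.2 zero_le_one)
        (convex_Ici 1)).smul (by linarith)
    have h2 : ConvexOn ℝ (Set.Ici (1:ℝ)) (fun x => -Real.log x) :=
      (strictConcaveOn_log_Ioi.concaveOn.subset
        (fun x hx => lt_of_lt_of_le one_pos hx) (convex_Ici 1)).neg
    have heq : (fun x => (x * s - 1) * Real.log x)
        = (fun x => s * (x * Real.log x)) + (fun x => -Real.log x) := by
      funext x; simp only [Pi.add_apply]; ring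
    rw [heq]; exact h1.add h2
  have ha : (0:ℝ) ≤ (s - r) / (s - 1) := by
    apply div_nonneg <;> linarith
  have hb : (0:ℝ) ≤ (r - 1) / (s - 1) := by
    apply div_nonneg <;> linarith
  have hab : (s - r) / (s - 1) + (r - 1) / (s - 1) = 1 := by
    rw [← add_div, show s - r + (r - 1) = s - 1 by ring, div_self hsne]
  have hcomb : (s - r) / (s - 1) + (r - 1) / (s - 1) * s = r := by
    field_simp
    ring
  have key := hconv.2 (Set.self_mem_Ici (a := (1:ℝ)))
    (Set.mem_Ici.2 hs.le) ha hb hab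
  simp only [smul_eq_mul, mul_one, one_mul, hcomb, Real.log_one, mul_zero,
    zero_add] at key
  calc (r * s - 1) * Real.log r ≤ (r - 1) / (s - 1) * ((s * s - 1) * Real.log s) := key
    _ = (s + 1) * (r - 1) * Real.log s := by
        rw [div_mul_eq_mul_div, div_eq_iff hsne]; ring

theorem constant_case2_improves (p q : ℝ) (hp : 1 < p) (hp2 : p ≤ 2) (hq : 2 < q)
    (hpq : 1 / p + 1 / q > 1) :
    (q - 1) ^ ((q - p) / (p * (q - 2))) ≤ 1 / (p - 1) ∧
      ∀ d : ℕ, 0 < d →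
        (q - 1) ^ ((q - p) / (p * (q - 2)) * ((d : ℝ) / 2)) ≤
          (p - 1) ^ (-((d : ℝ) / 2)) := by
  have hp0 : 0 < p := by linarith
  have hq0 : 0 < q := by linarith
  have hp1 : 0 < p - 1 := by linarith
  have hp1' : p - 1 ≠ 0 := ne_of_gt hp1
  have hsum : p + q > p * q := by
    have h := hpq
    rw [div_add_div _ _ (ne_of_gt hp0) (ne_of_gt hq0), gt_iff_lt,
      lt_div_iff₀ (by positivity)] at h
    linarith
  set s : ℝ := 1 / (p - 1) with hs_def
  set r : ℝ := q - 1 with hr_def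
  have hr1 : 1 < r := by rw [hr_def]; linarith
  have hrs : r < s := by
    rw [hr_def, hs_def, lt_div_iff₀ hp1]
    nlinarith
  have hs1 : 1 < s := lt_trans hr1 hrs
  have hs0 : 0 < s := by linarith
  have hr0 : 0 < r := by linarith
  have hkey := chord_key s r hs1 hr1.le hrs.le
  have hden : 0 < p * (q - 2) := by
    apply mul_pos hp0; linarith
  have e1 : r * s - 1 = (q - p) / (p - 1) := by
    rw [hr_def, hs_def, eq_div_iff hp1']; field_simp
    ring
  have e2 : (s + 1) * (r - 1) = p * (q - 2) / (p - 1) := by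
    rw [hr_def, hs_def, eq_div_iff hp1']; field_simp
    ring
  rw [e1, e2] at hkey
  rw [div_mul_eq_mul_div, div_mul_eq_mul_div, div_le_div_iff₀ hp1 hp1] at hkey
  have hkey' : (q - p) * Real.log r ≤ p * (q - 2) * Real.log s :=
    le_of_mul_le_mul_right hkey hp1
  have hexp : Real.log r * ((q - p) / (p * (q - 2))) ≤ Real.log s := by
    rw [mul_comm, div_mul_eq_mul_div, div_le_iff₀ hden]
    calc (q - p) * Real.log r ≤ p * (q - 2) * Real.log s := hkey'
      _ = Real.log s * (p * (q - 2)) := by ring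
  have hmain : r ^ ((q - p) / (p * (q - 2))) ≤ s := by
    rw [← Real.exp_log hs0, Real.rpow_def_of_pos hr0, Real.exp_le_exp]
    exact hexp
  refine ⟨hmain, fun d hd => ?_⟩
  have hd2 : (0:ℝ) ≤ (d : ℝ) / 2 := by positivity
  have h1 : r ^ ((q - p) / (p * (q - 2)) * ((d:ℝ)/2))
      = (r ^ ((q - p) / (p * (q - 2)))) ^ ((d:ℝ)/2) :=
    Real.rpow_mul hr0.le _ _
  have h2 : (p - 1) ^ (-((d:ℝ)/2)) = s ^ ((d:ℝ)/2) := by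
    rw [hs_def, Real.rpow_neg hp1.le, ← Real.inv_rpow hp1.le, one_div]
  rw [h1, h2]
  exact Real.rpow_le_rpow (Real.rpow_nonneg hr0.le _) hmain hd2
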